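/- Let (a_k) be a real sequence with a_{k+1} - a_k > δ for all k and some δ > 0. Then the generalized discrete Hilbert transform (G_a ξ)(n) = Σ_{k≠n} ξ_k/(a_k - a_n) is bounded on ℓ²(ℕ) with norm at most (1/δ)(2π²/3 + 2‖G‖), where ‖G‖ is the norm of the standard discrete Hilbert transform. -/

import Mathlib

open scoped Real

namespace Stmt2Aux

noncomputable def mm (a : ℕ → ℝ) (δ : ℝ) (k : ℕ) : ℤ := ⌈2 * a k / δ⌉

noncomputable def ff (a : ℕ → ℝ) (δ : ℝ) (k : ℕ) : ℕ := (mm a δ k - mm a δ 0).toNat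

variable {a : ℕ → ℝ} {δ : ℝ}

lemma a_lt (hδ : 0 < δ) (hgap : ∀ k, a (k + 1) - a k > δ) {n k : ℕ} (h : n < k) :
    a n + δ * (k - n : ℕ) < a k := by
  induction k, h using Nat.le_induction with
  | base => simpa using by linarith [hgap n]
  | succ k hk ih =>
      have h2 := hgap k
      have hnk : n ≤ k := Nat.le_of_succ_le hk
      have hc : k + 1 - n = (k - n) + 1 := by omega
      have : ((k + 1 - n : ℕ) : ℝ) = ((k - n : ℕ) : ℝ) + 1 := by rw [hc]; push_cast; ring
      rw [this]; nlinarith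

lemma mm_step (hδ : 0 < δ) (hgap : ∀ k, a (k + 1) - a k > δ) (k : ℕ) :
    mm a δ k + 2 ≤ mm a δ (k + 1) := by
  have h2 : (mm a δ k : ℝ) < 2 * a k / δ + 1 := Int.ceil_lt_add_one _
  have h3 : 2 * a (k + 1) / δ ≤ (mm a δ (k + 1) : ℝ) := Int.le_ceil _
  have h1 : 2 * a k / δ + 2 < 2 * a (k + 1) / δ := by
    have h := hgap k
    rw [div_add' _ _ _ hδ.ne', div_lt_div_iff₀ hδ hδ]
    nlinarith
  have : (mm a δ k : ℝ) + 1 < (mm a δ (k + 1) : ℝ) := by linarith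
  have := (by exact_mod_cast this : mm a δ k + 1 < mm a δ (k + 1))
  omega

lemma mm_le (hδ : 0 < δ) (hgap : ∀ k, a (k + 1) - a k > δ) {n k : ℕ} (h : n ≤ k) :
    mm a δ n + 2 * (k - n : ℕ) ≤ mm a δ k := by
  induction k, h using Nat.le_induction with
  | base => simp
  | succ k hk ih =>
      have := mm_step hδ hgap k
      have hc : ((k + 1 - n : ℕ) : ℤ) = ((k - n : ℕ) : ℤ) + 1 := by omega
      rw [hc]; omega

lemma ff_cast (hδ : 0 < δ) (hgap : ∀ k, a (k + 1) - a k > δ) (k : ℕ) :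
    (ff a δ k : ℤ) = mm a δ k - mm a δ 0 := by
  have := mm_le hδ hgap (Nat.zero_le k)
  have h0 : (0:ℤ) ≤ mm a δ k - mm a δ 0 := by omega
  simpa [ff] using Int.toNat_of_nonneg h0

lemma ff_sub (hδ : 0 < δ) (hgap : ∀ k, a (k + 1) - a k > δ) (k n : ℕ) :
    (ff a δ k : ℤ) - ff a δ n = mm a δ k - mm a δ n := by
  rw [ff_cast hδ hgap, ff_cast hδ hgap]; ring

lemma ff_inj (hδ : 0 < δ) (hgap : ∀ k, a (k + 1) - a k > δ) :
    Function.Injective (ff a δ) := by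
  have hs : StrictMono (ff a δ) := by
    intro i j hij
    have h1 := mm_le hδ hgap (Nat.le_of_lt hij)
    have h2 : (0:ℤ) < (j - i : ℕ) := by exact_mod_cast Nat.sub_pos_of_lt hij
    have hi := ff_cast hδ hgap i
    have hj := ff_cast hδ hgap j
    omega
  exact hs.injective

lemma abs_a (hδ : 0 < δ) (hgap : ∀ k, a (k + 1) - a k > δ) {k n : ℕ} (h : k ≠ n) :
    δ * |(k : ℝ) - n| ≤ |a k - a n| := by
  have key : ∀ {i j : ℕ}, i < j → δ * |(i : ℝ) - j| ≤ |a i - a j| := by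
    intro i j hij
    have h1 := a_lt hδ hgap hij
    have hc1 : ((j - i : ℕ) : ℝ) = (j : ℝ) - i := by
      push_cast [Nat.cast_sub hij.le]; ring
    have hij' : (i : ℝ) ≤ j := by exact_mod_cast hij.le
    have habs : |(i : ℝ) - j| = (j : ℝ) - i := by
      rw [abs_sub_comm, abs_of_nonneg (by linarith)]
    have h2 : δ * ((j:ℝ) - i) < a j - a i := by rw [← hc1]; linarith [h1, hc1]
    have h3 : (0:ℝ) ≤ a j - a i := by nlinarith [mul_nonneg hδ.le (by linarith : (0:ℝ) ≤ (j:ℝ) - i)]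
    rw [habs, abs_sub_comm, abs_of_nonneg h3]
    linarith
  rcases h.lt_or_gt with hlt | hlt
  · exact key hlt
  · rw [abs_sub_comm, abs_sub_comm (a k)]
    exact key hlt

lemma abs_ff (hδ : 0 < δ) (hgap : ∀ k, a (k + 1) - a k > δ) {k n : ℕ} (h : k ≠ n) :
    2 * |(k : ℝ) - n| ≤ |(ff a δ k : ℝ) - ff a δ n| := by
  have key : ∀ {i j : ℕ}, i < j → 2 * ((j : ℤ) - i) ≤ (ff a δ j : ℤ) - ff a δ i := by
    intro i j hij
    have h1 := mm_le hδ hgap hij.le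
    have hi := ff_cast hδ hgap i
    have hj := ff_cast hδ hgap j
    have : ((j - i : ℕ) : ℤ) = (j : ℤ) - i := by omega
    omega
  have keyR : ∀ {i j : ℕ}, i < j → 2 * |(i : ℝ) - j| ≤ |(ff a δ i : ℝ) - ff a δ j| := by
    intro i j hij
    have h1 := key hij
    have h2 : 2 * ((j : ℝ) - i) ≤ (ff a δ j : ℝ) - ff a δ i := by exact_mod_cast h1
    have hij' : (i : ℝ) ≤ j := by exact_mod_cast hij.le
    have hffle : (ff a δ i : ℝ) ≤ ff a δ j := by nlinarith
    rw [abs_sub_comm, abs_of_nonneg (by linarith), abs_sub_comm, abs_of_nonneg (by linarith)]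
    linarith
  rcases h.lt_or_gt with hlt | hlt
  · exact keyR hlt
  · rw [abs_sub_comm, abs_sub_comm ((ff a δ k : ℝ))]
    exact keyR hlt

lemma b_bounds (hδ : 0 < δ) (k : ℕ) :
    a k ≤ δ / 2 * mm a δ k ∧ δ / 2 * mm a δ k ≤ a k + δ / 2 := by
  have h1 : 2 * a k / δ ≤ (mm a δ k : ℝ) := Int.le_ceil _
  have h2 : (mm a δ k : ℝ) < 2 * a k / δ + 1 := Int.ceil_lt_add_one _
  have h1' : 2 * a k ≤ (mm a δ k : ℝ) * δ := (div_le_iff₀ hδ).mp h1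
  have h2' : ((mm a δ k : ℝ) - 1) * δ < 2 * a k := by
    rw [← lt_div_iff₀ hδ]; linarith
  constructor <;> nlinarith

/-! ### The weight kernel and error kernel -/

noncomputable def w (k n : ℕ) : ℝ := if k = n then 0 else 1 / ((k : ℝ) - n) ^ 2

noncomputable def ρ (a : ℕ → ℝ) (δ : ℝ) (k n : ℕ) : ℝ :=
  if k = n then 0
  else 1 / (a k - a n) - (2 / δ) / ((ff a δ k : ℝ) - ff a δ n)

lemma w_nonneg (k n : ℕ) : 0 ≤ w k n := by
  unfold w; split <;> positivity

lemma one_le_abs_cast {k n : ℕ} (h : k ≠ n) : 1 ≤ |(k : ℝ) - n| := by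
  have h1 : (k : ℤ) - n ≠ 0 := by
    intro hc; apply h; omega
  have := Int.one_le_abs h1
  have : (1 : ℝ) ≤ |((k : ℤ) - n : ℤ)| := by exact_mod_cast this
  simpa using this

lemma w_symm (k n : ℕ) : w k n = w n k := by
  unfold w
  rcases eq_or_ne k n with rfl | h
  · simp
  · rw [if_neg h, if_neg (Ne.symm h), ← neg_sub ((n:ℝ)) ((k:ℝ)), neg_sq]

lemma w_le_one (k n : ℕ) : w k n ≤ 1 := by
  unfold w
  split
  · norm_num
  · rename_i h
    have h1 := one_le_abs_cast h
    have h2 : (0:ℝ) < ((k:ℝ) - n) ^ 2 := by nlinarith [sq_abs ((k:ℝ) - n)]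
    rw [div_le_one h2]
    nlinarith [sq_abs ((k:ℝ) - n)]

lemma rho_bound (hδ : 0 < δ) (hgap : ∀ k, a (k + 1) - a k > δ) (k n : ℕ) :
    |ρ a δ k n| ≤ δ⁻¹ * w k n := by
  unfold ρ w
  rcases eq_or_ne k n with rfl | h
  · simp
  rw [if_neg h, if_neg h]
  set x := a k - a n with hx
  set z := (ff a δ k : ℝ) - ff a δ n with hz
  have hD : (0:ℝ) < |(k:ℝ) - n| := lt_of_lt_of_le one_pos (one_le_abs_cast h)
  have hax : δ * |(k:ℝ) - n| ≤ |x| := abs_a hδ hgap h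
  have hfz : 2 * |(k:ℝ) - n| ≤ |z| := abs_ff hδ hgap h
  have hxpos : (0:ℝ) < |x| := lt_of_lt_of_le (mul_pos hδ hD) hax
  have hzpos : (0:ℝ) < |z| := lt_of_lt_of_le (by nlinarith) hfz
  have hxne : x ≠ 0 := by simpa [abs_pos] using hxpos
  have hzne : z ≠ 0 := by simpa [abs_pos] using hzpos
  set y := δ / 2 * z with hy
  have hyne : y ≠ 0 := mul_ne_zero (div_ne_zero hδ.ne' two_ne_zero) hzne
  have hyabs : |y| = δ / 2 * |z| := by
    rw [hy, abs_mul, abs_of_nonneg (by linarith : (0:ℝ) ≤ δ / 2)]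
  have hform : (2 / δ) / z = 1 / y := by
    rw [hy, div_div, div_eq_div_iff (mul_ne_zero hδ.ne' hzne)
      (mul_ne_zero (div_ne_zero hδ.ne' two_ne_zero) hzne)]
    ring
  rw [hform]
  have hsub : 1 / x - 1 / y = (y - x) / (x * y) := by
    rw [div_sub_div _ _ hxne hyne, one_mul, mul_one]
  rw [hsub, abs_div, abs_mul]
  -- bound numerator
  have hnum : |y - x| ≤ δ := by
    have hbk := b_bounds (a := a) hδ k
    have hbn := b_bounds (a := a) hδ n
    have hyx : y - x = (δ / 2 * mm a δ k - a k) - (δ / 2 * mm a δ n - a n) := by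
      rw [hy, hz, hx]
      have h1 : ((ff a δ k : ℝ)) - ff a δ n = ((mm a δ k : ℝ)) - mm a δ n := by
        have := ff_sub hδ hgap k n
        exact_mod_cast this
      rw [h1]; ring
    rw [hyx]
    rw [abs_le]
    exact ⟨by linarith [hbk.1, hbk.2, hbn.1, hbn.2], by linarith [hbk.1, hbk.2, hbn.1, hbn.2]⟩
  have hyb : δ * |(k:ℝ) - n| ≤ |y| := by
    rw [hyabs]; nlinarith
  have hden : δ * |(k:ℝ) - n| * (δ * |(k:ℝ) - n|) ≤ |x| * |y| := by
    apply mul_le_mul hax hyb (by positivity) (abs_nonneg _)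
  have hrhs : (1 : ℝ) / ((k:ℝ) - n) ^ 2 = 1 / |(k:ℝ) - n| ^ 2 := by rw [sq_abs]
  calc |y - x| / (|x| * |y|) ≤ δ / (δ * |(k:ℝ) - n| * (δ * |(k:ℝ) - n|)) := by
        apply div_le_div₀ hδ.le hnum (by positivity) hden
    _ = δ⁻¹ * (1 / ((k:ℝ) - n) ^ 2) := by
        rw [hrhs]
        generalize hDD : |(k:ℝ) - n| = D at hD ⊢
        field_simp

/-! ### Summability of the weight -/

lemma gI_hasSum : HasSum (fun j : ℤ => 1 / (j : ℝ) ^ 2) (π ^ 2 / 3) := by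
  have hz := hasSum_zeta_two
  have h1 : HasSum (fun n : ℕ => 1 / (((n : ℤ)) : ℝ) ^ 2) (π ^ 2 / 6) := by
    have hfun1 : (fun n : ℕ => 1 / (((n : ℤ)) : ℝ) ^ 2) = fun n : ℕ => (1:ℝ) / (n : ℝ) ^ 2 := by
      funext n; norm_num
    rw [hfun1]; exact hz
  have h4 : HasSum (fun n : ℕ => (1:ℝ) / ((n + 1 : ℕ) : ℝ) ^ 2) (π ^ 2 / 6) := by
    have h0 : HasSum (fun n : ℕ => (1:ℝ) / (n : ℝ) ^ 2)
        (π ^ 2 / 6 + ∑ i ∈ Finset.range 1, (1:ℝ) / (i : ℝ) ^ 2) := by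
      simpa using hz
    exact (hasSum_nat_add_iff (f := fun n : ℕ => (1:ℝ) / (n : ℝ) ^ 2) 1).mpr h0
  have h2 : HasSum (fun n : ℕ => 1 / (((-((n : ℤ) + 1)) : ℤ) : ℝ) ^ 2) (π ^ 2 / 6) := by
    have hfun2 : (fun n : ℕ => 1 / (((-((n : ℤ) + 1)) : ℤ) : ℝ) ^ 2)
        = fun n : ℕ => (1:ℝ) / ((n + 1 : ℕ) : ℝ) ^ 2 := by
      funext n; push_cast; ring
    rw [hfun2]; exact h4
  have hfin := HasSum.of_nat_of_neg_add_one (f := fun j : ℤ => 1 / (j : ℝ) ^ 2) h1 h2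
  have heq : π ^ 2 / 6 + π ^ 2 / 6 = π ^ 2 / 3 := by ring
  rwa [heq] at hfin

lemma cast_inj_sub (n : ℕ) : Function.Injective (fun k : ℕ => (k : ℤ) - n) := by
  intro i j hij
  have : (i : ℤ) = j := by simpa using hij
  exact_mod_cast this

lemma w_eq_gI (k n : ℕ) : w k n = 1 / ((((k : ℤ) - n : ℤ)) : ℝ) ^ 2 := by
  unfold w
  rcases eq_or_ne k n with rfl | h
  · simp
  · rw [if_neg h]
    push_cast
    ring_nf

lemma w_summable (n : ℕ) : Summable fun k => w k n := by
  have := gI_hasSum.summable.comp_injective (cast_inj_sub n)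
  exact this.congr fun k => (w_eq_gI k n).symm

lemma w_tsum_le (n : ℕ) : ∑' k, w k n ≤ π ^ 2 / 3 := by
  have h := Summable.tsum_le_tsum_of_inj (g := fun j : ℤ => 1 / (j : ℝ) ^ 2)
    (fun k : ℕ => (k : ℤ) - n) (cast_inj_sub n)
    (fun c _ => by positivity) (fun k => le_of_eq (w_eq_gI k n))
    (w_summable n) gI_hasSum.summable
  exact h.trans_eq gI_hasSum.tsum_eq

/-! ### Generic helpers -/

lemma summable_mul_of_sq {ι : Type*} {u v : ι → ℝ} (hu0 : ∀ i, 0 ≤ u i) (hv0 : ∀ i, 0 ≤ v i)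
    (hu : Summable fun i => u i ^ 2) (hv : Summable fun i => v i ^ 2) :
    Summable fun i => u i * v i := by
  refine Summable.of_nonneg_of_le (fun i => mul_nonneg (hu0 i) (hv0 i))
    (fun i => ?_) ((hu.add hv).div_const 2)
  have := sq_nonneg (u i - v i)
  have : u i * v i ≤ (u i ^ 2 + v i ^ 2) / 2 := by nlinarith
  simpa using this

lemma tsum_mul_sq_le {ι : Type*} {u v : ι → ℝ} (hu0 : ∀ i, 0 ≤ u i) (hv0 : ∀ i, 0 ≤ v i)
    (hu : Summable fun i => u i ^ 2) (hv : Summable fun i => v i ^ 2) :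
    (∑' i, u i * v i) ^ 2 ≤ (∑' i, u i ^ 2) * ∑' i, v i ^ 2 := by
  set A := ∑' i, u i ^ 2 with hA
  set B := ∑' i, v i ^ 2 with hB
  have hA0 : 0 ≤ A := tsum_nonneg fun i => sq_nonneg _
  have hB0 : 0 ≤ B := tsum_nonneg fun i => sq_nonneg _
  have hsum : Summable fun i => u i * v i := summable_mul_of_sq hu0 hv0 hu hv
  have hle : (∑' i, u i * v i) ≤ Real.sqrt (A * B) := by
    refine Summable.tsum_le_of_sum_le hsum fun s => ?_
    have h1 : (∑ i ∈ s, u i * v i) ^ 2 ≤ (∑ i ∈ s, u i ^ 2) * ∑ i ∈ s, v i ^ 2 :=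
      Finset.sum_mul_sq_le_sq_mul_sq s u v
    have h2 : (∑ i ∈ s, u i ^ 2) ≤ A := Summable.sum_le_tsum s (fun i _ => sq_nonneg _) hu
    have h3 : (∑ i ∈ s, v i ^ 2) ≤ B := Summable.sum_le_tsum s (fun i _ => sq_nonneg _) hv
    have h4 : (∑ i ∈ s, u i * v i) ^ 2 ≤ A * B := by
      refine h1.trans (mul_le_mul h2 h3 (Finset.sum_nonneg fun i _ => sq_nonneg _) hA0)
    have h5 : 0 ≤ ∑ i ∈ s, u i * v i := Finset.sum_nonneg fun i _ => mul_nonneg (hu0 i) (hv0 i)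
    calc (∑ i ∈ s, u i * v i) = Real.sqrt ((∑ i ∈ s, u i * v i) ^ 2) := (Real.sqrt_sq h5).symm
      _ ≤ Real.sqrt (A * B) := Real.sqrt_le_sqrt h4
  have h6 : 0 ≤ ∑' i, u i * v i := tsum_nonneg fun i => mul_nonneg (hu0 i) (hv0 i)
  calc (∑' i, u i * v i) ^ 2 ≤ Real.sqrt (A * B) ^ 2 := by
        exact pow_le_pow_left₀ h6 hle 2
    _ = A * B := Real.sq_sqrt (mul_nonneg hA0 hB0)

/-! ### lp helpers -/

local notation "H" => lp (fun _ : ℕ => ℂ) 2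

lemma rpow2 (x : ℝ) (hx : 0 ≤ x) : x ^ (2 : ENNReal).toReal = x ^ 2 := by
  have h : (2 : ENNReal).toReal = ((2 : ℕ) : ℝ) := by norm_num
  rw [h, Real.rpow_natCast]

lemma mem2 {g : ℕ → ℂ} (h : Summable fun n => ‖g n‖ ^ 2) : Memℓp g 2 := by
  apply memℓp_gen
  refine h.congr fun n => ?_
  rw [rpow2 _ (norm_nonneg _)]

lemma summable_sq (g : H) : Summable fun n => ‖(g : ∀ _ : ℕ, ℂ) n‖ ^ 2 := by
  have := (lp.memℓp g).summable (p := 2) (by norm_num)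
  refine this.congr fun n => ?_
  rw [rpow2 _ (norm_nonneg _)]

lemma norm_sq_eq (g : H) : ‖g‖ ^ 2 = ∑' n, ‖(g : ∀ _ : ℕ, ℂ) n‖ ^ 2 := by
  have := lp.norm_rpow_eq_tsum (p := 2) (by norm_num) g
  rw [rpow2 _ (lp.norm_nonneg' g)] at this
  rw [this]
  exact tsum_congr fun n => by rw [rpow2 _ (norm_nonneg _)]

lemma norm_le_of_sq {g : H} {C : ℝ} (hC : 0 ≤ C)
    (h : ∑' n, ‖(g : ∀ _ : ℕ, ℂ) n‖ ^ 2 ≤ C ^ 2) : ‖g‖ ≤ C := by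
  refine lp.norm_le_of_tsum_le (p := 2) (by norm_num) hC ?_
  rw [rpow2 _ hC]
  refine le_trans (le_of_eq (tsum_congr fun n => rpow2 _ (norm_nonneg _))) h

/-! ### The extension operator -/

open Classical in
noncomputable def Epre (f : ℕ → ℕ) (ξ : ℕ → ℂ) (j : ℕ) : ℂ :=
  if h : ∃ k, f k = j then ξ h.choose else 0

variable {f : ℕ → ℕ}

lemma Epre_apply (hf : Function.Injective f) (ξ : ℕ → ℂ) (k : ℕ) :
    Epre f ξ (f k) = ξ k := by
  have h : ∃ k', f k' = f k := ⟨k, rfl⟩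
  rw [Epre, dif_pos h, hf h.choose_spec]

lemma Epre_not (ξ : ℕ → ℂ) {j : ℕ} (hj : j ∉ Set.range f) : Epre f ξ j = 0 := by
  rw [Epre, dif_neg]
  simpa [Set.mem_range] using hj

lemma Epre_add (ξ ζ : ℕ → ℂ) : Epre f (ξ + ζ) = Epre f ξ + Epre f ζ := by
  funext j
  by_cases h : ∃ k, f k = j <;> simp [Epre, h]

lemma Epre_smul (c : ℂ) (ξ : ℕ → ℂ) : Epre f (c • ξ) = c • Epre f ξ := by
  funext j
  by_cases h : ∃ k, f k = j <;> simp [Epre, h]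

lemma Epre_sq_summable (hf : Function.Injective f) {ξ : ℕ → ℂ}
    (hξ : Summable fun k => ‖ξ k‖ ^ 2) : Summable fun j => ‖Epre f ξ j‖ ^ 2 := by
  refine (Function.Injective.summable_iff hf ?_).mp ?_
  · intro j hj
    rw [Epre_not ξ hj]
    simp
  · refine hξ.congr fun k => ?_
    simp [Function.comp, Epre_apply hf]

lemma Epre_sq_tsum (hf : Function.Injective f) {ξ : ℕ → ℂ}
    (hξ : Summable fun k => ‖ξ k‖ ^ 2) :
    ∑' j, ‖Epre f ξ j‖ ^ 2 = ∑' k, ‖ξ k‖ ^ 2 := by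
  rw [← Function.Injective.tsum_eq hf (f := fun j => ‖Epre f ξ j‖ ^ 2) ?_]
  · exact tsum_congr fun k => by rw [Epre_apply hf]
  · intro j hj
    rcases em (j ∈ Set.range f) with h | h
    · exact h
    · exact absurd (by simp [Epre_not ξ h] : ‖Epre f ξ j‖ ^ 2 = 0) hj

noncomputable def Eop (f : ℕ → ℕ) (hf : Function.Injective f) :
    H →L[ℂ] H := by
  refine LinearMap.mkContinuous
    { toFun := fun ξ => ⟨Epre f ξ, mem2 (Epre_sq_summable hf (summable_sq ξ))⟩
      map_add' := fun ξ ζ => ?_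
      map_smul' := fun c ξ => ?_ } 1 (fun ξ => ?_)
  · ext j
    have : Epre f ((ξ : ∀ _ : ℕ, ℂ) + (ζ : ∀ _ : ℕ, ℂ)) = Epre f ξ + Epre f ζ := Epre_add _ _
    first | exact congrFun this j | (simp only [lp.coeFn_add]; exact congrFun this j) | (simp [lp.coeFn_add]; exact congrFun this j)
  · ext j
    have : Epre f (c • (ξ : ∀ _ : ℕ, ℂ)) = c • Epre f ξ := Epre_smul _ _
    simpa [lp.coeFn_smul] using congrFun this j
  · rw [one_mul]
    refine norm_le_of_sq (norm_nonneg _) ?_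
    rw [norm_sq_eq]
    exact le_of_eq (Epre_sq_tsum hf (summable_sq ξ))

lemma Eop_apply (hf : Function.Injective f) (ξ : H) (j : ℕ) :
    (Eop f hf ξ : ∀ _ : ℕ, ℂ) j = Epre f ξ j := rfl

lemma Eop_norm_le (hf : Function.Injective f) : ‖Eop f hf‖ ≤ 1 :=
  LinearMap.mkContinuous_norm_le _ zero_le_one _

/-! ### The restriction operator -/

noncomputable def Pop (f : ℕ → ℕ) (hf : Function.Injective f) :
    H →L[ℂ] H := by
  refine LinearMap.mkContinuous
    { toFun := fun η => ⟨fun k => (η : ∀ _ : ℕ, ℂ) (f k), mem2 ((summable_sq η).comp_injective hf)⟩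
      map_add' := fun η ζ => ?_
      map_smul' := fun c η => ?_ } 1 (fun η => ?_)
  · ext k; simp [lp.coeFn_add]; rfl
  · ext k; simp [lp.coeFn_smul]
  · rw [one_mul]
    refine norm_le_of_sq (norm_nonneg _) ?_
    rw [norm_sq_eq]
    refine Summable.tsum_le_tsum_of_inj f hf (fun c _ => sq_nonneg _) (fun k => le_rfl)
      ((summable_sq η).comp_injective hf) (summable_sq η)

lemma Pop_apply (hf : Function.Injective f) (η : H) (k : ℕ) :
    (Pop f hf η : ∀ _ : ℕ, ℂ) k = (η : ∀ _ : ℕ, ℂ) (f k) := rfl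

lemma Pop_norm_le (hf : Function.Injective f) : ‖Pop f hf‖ ≤ 1 :=
  LinearMap.mkContinuous_norm_le _ zero_le_one _

/-! ### The error operator -/

section Rop

variable (a δ)

noncomputable def Rfun (ξ : H) (n : ℕ) : ℂ := ∑' k, ((ρ a δ k n : ℝ) : ℂ) * (ξ : ∀ _ : ℕ, ℂ) k

variable {a δ}
variable (hδ : 0 < δ) (hgap : ∀ k, a (k + 1) - a k > δ)

lemma w_summable' (k : ℕ) : Summable fun n => w k n :=
  (w_summable k).congr fun n => (w_symm n k)

lemma w_tsum_le' (k : ℕ) : ∑' n, w k n ≤ π ^ 2 / 3 := by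
  refine le_trans (le_of_eq (tsum_congr fun n => w_symm k n)) (w_tsum_le k)

lemma summable_w_norm (ξ : H) (n : ℕ) :
    Summable fun k => w k n * ‖(ξ : ∀ _ : ℕ, ℂ) k‖ := by
  refine Summable.of_nonneg_of_le
    (fun k => mul_nonneg (w_nonneg k n) (norm_nonneg _)) (fun k => ?_)
    ((w_summable n).mul_right ‖ξ‖)
  exact mul_le_mul_of_nonneg_left (lp.norm_apply_le_norm (by norm_num) ξ k) (w_nonneg k n)

lemma summable_w_norm_sq (ξ : H) (n : ℕ) :
    Summable fun k => w k n * ‖(ξ : ∀ _ : ℕ, ℂ) k‖ ^ 2 := by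
  refine Summable.of_nonneg_of_le
    (fun k => mul_nonneg (w_nonneg k n) (sq_nonneg _)) (fun k => ?_) (summable_sq ξ)
  calc w k n * ‖(ξ : ∀ _ : ℕ, ℂ) k‖ ^ 2 ≤ 1 * ‖(ξ : ∀ _ : ℕ, ℂ) k‖ ^ 2 :=
        mul_le_mul_of_nonneg_right (w_le_one k n) (sq_nonneg _)
    _ = _ := one_mul _

lemma summable_w_norm_sq' (ξ : H) (k : ℕ) :
    Summable fun n => w k n * ‖(ξ : ∀ _ : ℕ, ℂ) k‖ ^ 2 :=
  (w_summable' k).mul_right _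

include hδ hgap in
lemma summable_rho_norm (ξ : H) (n : ℕ) :
    Summable fun k => ‖((ρ a δ k n : ℝ) : ℂ) * (ξ : ∀ _ : ℕ, ℂ) k‖ := by
  refine Summable.of_nonneg_of_le (fun k => norm_nonneg _) (fun k => ?_)
    ((summable_w_norm ξ n).mul_left δ⁻¹)
  rw [norm_mul, Complex.norm_real]
  calc |ρ a δ k n| * ‖(ξ : ∀ _ : ℕ, ℂ) k‖
      ≤ (δ⁻¹ * w k n) * ‖(ξ : ∀ _ : ℕ, ℂ) k‖ :=
        mul_le_mul_of_nonneg_right (rho_bound hδ hgap k n) (norm_nonneg _)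
    _ = δ⁻¹ * (w k n * ‖(ξ : ∀ _ : ℕ, ℂ) k‖) := by ring

include hδ hgap in
lemma summable_rho (ξ : H) (n : ℕ) :
    Summable fun k => ((ρ a δ k n : ℝ) : ℂ) * (ξ : ∀ _ : ℕ, ℂ) k :=
  (summable_rho_norm hδ hgap ξ n).of_norm

include hδ hgap in
lemma Rfun_bound (ξ : H) (n : ℕ) :
    ‖Rfun a δ ξ n‖ ≤ δ⁻¹ * ∑' k, w k n * ‖(ξ : ∀ _ : ℕ, ℂ) k‖ := by
  refine le_trans (norm_tsum_le_tsum_norm (summable_rho_norm hδ hgap ξ n)) ?_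
  rw [← tsum_mul_left]
  refine Summable.tsum_le_tsum (fun k => ?_) (summable_rho_norm hδ hgap ξ n)
    ((summable_w_norm ξ n).mul_left δ⁻¹)
  rw [norm_mul, Complex.norm_real, ← mul_assoc]
  exact mul_le_mul_of_nonneg_right (rho_bound hδ hgap k n) (norm_nonneg _)

lemma cs_step (ξ : H) (n : ℕ) :
    (∑' k, w k n * ‖(ξ : ∀ _ : ℕ, ℂ) k‖) ^ 2
      ≤ π ^ 2 / 3 * ∑' k, w k n * ‖(ξ : ∀ _ : ℕ, ℂ) k‖ ^ 2 := by
  have key := tsum_mul_sq_le (u := fun k => Real.sqrt (w k n))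
    (v := fun k => Real.sqrt (w k n) * ‖(ξ : ∀ _ : ℕ, ℂ) k‖)
    (fun k => Real.sqrt_nonneg _)
    (fun k => mul_nonneg (Real.sqrt_nonneg _) (norm_nonneg _))
    (by refine (w_summable n).congr fun k => ?_; rw [Real.sq_sqrt (w_nonneg k n)])
    (by
      refine (summable_w_norm_sq ξ n).congr fun k => ?_
      rw [mul_pow, Real.sq_sqrt (w_nonneg k n)])
  have h1 : ∀ k, Real.sqrt (w k n) * (Real.sqrt (w k n) * ‖(ξ : ∀ _ : ℕ, ℂ) k‖)
      = w k n * ‖(ξ : ∀ _ : ℕ, ℂ) k‖ := fun k => by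
    rw [← mul_assoc, Real.mul_self_sqrt (w_nonneg k n)]
  have h2 : ∀ k, Real.sqrt (w k n) ^ 2 = w k n := fun k => Real.sq_sqrt (w_nonneg k n)
  have h3 : ∀ k, (Real.sqrt (w k n) * ‖(ξ : ∀ _ : ℕ, ℂ) k‖) ^ 2
      = w k n * ‖(ξ : ∀ _ : ℕ, ℂ) k‖ ^ 2 := fun k => by
    rw [mul_pow, Real.sq_sqrt (w_nonneg k n)]
  rw [tsum_congr h1, tsum_congr h2, tsum_congr h3] at key
  refine key.trans ?_
  refine mul_le_mul_of_nonneg_right (w_tsum_le n) ?_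
  exact tsum_nonneg fun k => mul_nonneg (w_nonneg k n) (sq_nonneg _)

include hδ hgap in
lemma Rfun_sq_bound (ξ : H) (n : ℕ) :
    ‖Rfun a δ ξ n‖ ^ 2
      ≤ δ⁻¹ ^ 2 * (π ^ 2 / 3) * ∑' k, w k n * ‖(ξ : ∀ _ : ℕ, ℂ) k‖ ^ 2 := by
  have h0 : (0:ℝ) ≤ δ⁻¹ * ∑' k, w k n * ‖(ξ : ∀ _ : ℕ, ℂ) k‖ := by
    refine mul_nonneg (by positivity) (tsum_nonneg fun k => mul_nonneg (w_nonneg k n) (norm_nonneg _))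
  calc ‖Rfun a δ ξ n‖ ^ 2 ≤ (δ⁻¹ * ∑' k, w k n * ‖(ξ : ∀ _ : ℕ, ℂ) k‖) ^ 2 :=
        pow_le_pow_left₀ (norm_nonneg _) (Rfun_bound hδ hgap ξ n) 2
    _ = δ⁻¹ ^ 2 * (∑' k, w k n * ‖(ξ : ∀ _ : ℕ, ℂ) k‖) ^ 2 := by ring
    _ ≤ δ⁻¹ ^ 2 * (π ^ 2 / 3 * ∑' k, w k n * ‖(ξ : ∀ _ : ℕ, ℂ) k‖ ^ 2) :=
        mul_le_mul_of_nonneg_left (cs_step ξ n) (by positivity)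
    _ = _ := by ring

include hδ hgap in
lemma Rfun_finset_bound (ξ : H) (s : Finset ℕ) :
    ∑ n ∈ s, ‖Rfun a δ ξ n‖ ^ 2 ≤ (δ⁻¹ * (π ^ 2 / 3) * ‖ξ‖) ^ 2 := by
  have step1 : ∑ n ∈ s, ‖Rfun a δ ξ n‖ ^ 2
      ≤ δ⁻¹ ^ 2 * (π ^ 2 / 3) * ∑ n ∈ s, ∑' k, w k n * ‖(ξ : ∀ _ : ℕ, ℂ) k‖ ^ 2 := by
    rw [Finset.mul_sum]
    exact Finset.sum_le_sum fun n _ => Rfun_sq_bound hδ hgap ξ n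
  have hswap : ∑ n ∈ s, ∑' k, w k n * ‖(ξ : ∀ _ : ℕ, ℂ) k‖ ^ 2
      = ∑' k, ∑ n ∈ s, w k n * ‖(ξ : ∀ _ : ℕ, ℂ) k‖ ^ 2 :=
    (Summable.tsum_finsetSum fun n _ => summable_w_norm_sq ξ n).symm
  have hsummable1 : Summable fun k => ∑ n ∈ s, w k n * ‖(ξ : ∀ _ : ℕ, ℂ) k‖ ^ 2 :=
    summable_sum fun n _ => summable_w_norm_sq ξ n
  have step2 : ∑' k, ∑ n ∈ s, w k n * ‖(ξ : ∀ _ : ℕ, ℂ) k‖ ^ 2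
      ≤ ∑' k, π ^ 2 / 3 * ‖(ξ : ∀ _ : ℕ, ℂ) k‖ ^ 2 := by
    refine Summable.tsum_le_tsum (fun k => ?_) hsummable1 ((summable_sq ξ).mul_left _)
    rw [← Finset.sum_mul]
    refine mul_le_mul_of_nonneg_right ?_ (sq_nonneg _)
    exact (Summable.sum_le_tsum s (fun n _ => w_nonneg k n) (w_summable' k)).trans (w_tsum_le' k)
  have step3 : ∑' k, π ^ 2 / 3 * ‖(ξ : ∀ _ : ℕ, ℂ) k‖ ^ 2 = π ^ 2 / 3 * ‖ξ‖ ^ 2 := by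
    rw [tsum_mul_left, ← norm_sq_eq]
  calc ∑ n ∈ s, ‖Rfun a δ ξ n‖ ^ 2
      ≤ δ⁻¹ ^ 2 * (π ^ 2 / 3) * ∑ n ∈ s, ∑' k, w k n * ‖(ξ : ∀ _ : ℕ, ℂ) k‖ ^ 2 := step1
    _ = δ⁻¹ ^ 2 * (π ^ 2 / 3) * ∑' k, ∑ n ∈ s, w k n * ‖(ξ : ∀ _ : ℕ, ℂ) k‖ ^ 2 := by rw [hswap]
    _ ≤ δ⁻¹ ^ 2 * (π ^ 2 / 3) * (π ^ 2 / 3 * ‖ξ‖ ^ 2) := by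
        refine mul_le_mul_of_nonneg_left (step2.trans_eq step3) (by positivity)
    _ = (δ⁻¹ * (π ^ 2 / 3) * ‖ξ‖) ^ 2 := by ring

include hδ hgap in
lemma Rfun_summable_sq (ξ : H) : Summable fun n => ‖Rfun a δ ξ n‖ ^ 2 :=
  summable_of_sum_le (fun n => sq_nonneg _) (fun s => Rfun_finset_bound hδ hgap ξ s)

include hδ hgap in
lemma Rfun_mem (ξ : H) : Memℓp (Rfun a δ ξ) 2 := mem2 (Rfun_summable_sq hδ hgap ξ)

include hδ hgap in
noncomputable def Rop : H →L[ℂ] H := by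
  refine LinearMap.mkContinuous
    { toFun := fun ξ => (⟨Rfun a δ ξ, Rfun_mem hδ hgap ξ⟩ : H)
      map_add' := fun ξ ζ => ?_
      map_smul' := fun c ξ => ?_ } (δ⁻¹ * (π ^ 2 / 3)) (fun ξ => ?_)
  · ext n
    have : Rfun a δ (ξ + ζ) n = Rfun a δ ξ n + Rfun a δ ζ n := by
      unfold Rfun
      rw [← Summable.tsum_add (summable_rho hδ hgap ξ n) (summable_rho hδ hgap ζ n)]
      refine tsum_congr fun k => ?_
      rw [lp.coeFn_add]
      simp [mul_add]
    first | exact this | (simp only [lp.coeFn_add]; exact this) | (simp [lp.coeFn_add]; exact this)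
  · ext n
    have : Rfun a δ (c • ξ) n = c * Rfun a δ ξ n := by
      unfold Rfun
      rw [← tsum_mul_left]
      refine tsum_congr fun k => ?_
      rw [lp.coeFn_smul]
      simp
      ring
    simpa [lp.coeFn_smul] using this
  · refine norm_le_of_sq (by positivity) ?_
    have := Summable.tsum_le_of_sum_le (Rfun_summable_sq hδ hgap ξ) (Rfun_finset_bound hδ hgap ξ)
    calc ∑' n, ‖Rfun a δ ξ n‖ ^ 2 ≤ (δ⁻¹ * (π ^ 2 / 3) * ‖ξ‖) ^ 2 := this
      _ = (δ⁻¹ * (π ^ 2 / 3) * ‖ξ‖) ^ 2 := rfl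

lemma Rop_apply (ξ : H) (n : ℕ) :
    (Rop hδ hgap ξ : ∀ _ : ℕ, ℂ) n = Rfun a δ ξ n := rfl

lemma Rop_norm_le : ‖Rop hδ hgap‖ ≤ δ⁻¹ * (π ^ 2 / 3) := by
  refine LinearMap.mkContinuous_norm_le _ ?_ _
  · have h1 : (0:ℝ) ≤ δ⁻¹ := by positivity
    positivity

end Rop

/-! ### Pointwise formula for the transferred Hilbert transform -/

lemma T_apply {f : ℕ → ℕ} (hf : Function.Injective f)
    (G : H →L[ℂ] H)
    (hG : ∀ (ξ : H) (n : ℕ),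
      (G ξ : ∀ _ : ℕ, ℂ) n = ∑' k : {k : ℕ // k ≠ n}, ξ k / (((k : ℕ) : ℂ) - (n : ℂ)))
    (ξ : H) (n : ℕ) :
    (((Pop f hf).comp (G.comp (Eop f hf))) ξ : ∀ _ : ℕ, ℂ) n
      = ∑' k : {k : ℕ // k ≠ n},
          (ξ : ∀ _ : ℕ, ℂ) k / (((f k : ℕ) : ℂ) - ((f n : ℕ) : ℂ)) := by
  have h1 : (((Pop f hf).comp (G.comp (Eop f hf))) ξ : ∀ _ : ℕ, ℂ) n
      = (G (Eop f hf ξ) : ∀ _ : ℕ, ℂ) (f n) := rfl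
  rw [h1, hG]
  set g : {k : ℕ // k ≠ n} → ℂ :=
    fun k => (ξ : ∀ _ : ℕ, ℂ) k / (((f k : ℕ) : ℂ) - ((f n : ℕ) : ℂ)) with hg
  refine tsum_eq_tsum_of_ne_zero_bij
    (i := fun x => ⟨f x.1.1, fun hc => x.1.2 (hf hc)⟩) ?_ ?_ ?_
  · intro x y hxy
    have : f x.1.1 = f y.1.1 := congrArg Subtype.val hxy
    exact Subtype.ext (Subtype.ext (hf this))
  · rintro ⟨j, hj⟩ hjsupp
    have hEj : (Eop f hf ξ : ∀ _ : ℕ, ℂ) j ≠ 0 := by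
      intro hc
      apply hjsupp
      show (Eop f hf ξ : ∀ _ : ℕ, ℂ) j / _ = 0
      rw [hc, zero_div]
    have hjr : j ∈ Set.range f := by
      by_contra hc
      exact hEj (Epre_not _ hc)
    obtain ⟨k, rfl⟩ := hjr
    have hkn : k ≠ n := fun hc => hj (by rw [hc])
    have hξk : (ξ : ∀ _ : ℕ, ℂ) k ≠ 0 := by
      intro hc
      apply hEj
      rw [Eop_apply, Epre_apply hf, hc]
    have hgk : g ⟨k, hkn⟩ ≠ 0 := by
      rw [hg]
      intro hc
      apply hjsupp
      show (Eop f hf ξ : ∀ _ : ℕ, ℂ) (f k) / (((f k : ℕ) : ℂ) - ((f n : ℕ) : ℂ)) = 0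
      rw [Eop_apply, Epre_apply hf]
      exact hc
    exact ⟨⟨⟨k, hkn⟩, hgk⟩, rfl⟩
  · rintro ⟨⟨k, hk⟩, hsup⟩
    show (Eop f hf ξ : ∀ _ : ℕ, ℂ) (f k) / _ = _
    rw [Eop_apply, Epre_apply hf]

end Stmt2Aux

open Stmt2Aux

/-- for a real sequence with gaps `a_{k+1} - a_k > δ`, the generalized
discrete Hilbert transform is bounded on ℓ²(ℕ) with norm at most
`(1/δ)(2π²/3 + 2‖G‖)`, where `G` is the standard discrete Hilbert transform. -/
theorem stmt2 (a : ℕ → ℝ) (δ : ℝ) (hδ : 0 < δ) (hgap : ∀ k, a (k + 1) - a k > δ)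
    (G : lp (fun _ : ℕ => ℂ) 2 →L[ℂ] lp (fun _ : ℕ => ℂ) 2)
    (hG : ∀ (ξ : lp (fun _ : ℕ => ℂ) 2) (n : ℕ),
      (G ξ : ∀ _ : ℕ, ℂ) n = ∑' k : {k : ℕ // k ≠ n}, ξ k / (((k : ℕ) : ℂ) - (n : ℂ))) :
    ∃ Ga : lp (fun _ : ℕ => ℂ) 2 →L[ℂ] lp (fun _ : ℕ => ℂ) 2,
      ‖Ga‖ ≤ (1 / δ) * (2 * Real.pi ^ 2 / 3 + 2 * ‖G‖) ∧
      ∀ (ξ : lp (fun _ : ℕ => ℂ) 2) (n : ℕ),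
        (Ga ξ : ∀ _ : ℕ, ℂ) n = ∑' k : {k : ℕ // k ≠ n}, ξ k / ((a k : ℂ) - (a n : ℂ)) := by
  classical
  have hf : Function.Injective (ff a δ) := ff_inj hδ hgap
  set f := ff a δ with hfdef
  set T := (Pop f hf).comp (G.comp (Eop f hf)) with hT
  set c : ℂ := ((2 / δ : ℝ) : ℂ) with hc
  refine ⟨c • T + Rop hδ hgap, ?_, ?_⟩
  · -- norm bound
    have hTn : ‖T‖ ≤ ‖G‖ := by
      calc ‖T‖ ≤ ‖Pop f hf‖ * ‖G.comp (Eop f hf)‖ := ContinuousLinearMap.opNorm_comp_le _ _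
        _ ≤ ‖Pop f hf‖ * (‖G‖ * ‖Eop f hf‖) := by
            refine mul_le_mul_of_nonneg_left (ContinuousLinearMap.opNorm_comp_le _ _)
              (norm_nonneg _)
        _ ≤ 1 * (‖G‖ * 1) := by
            refine mul_le_mul (Pop_norm_le hf) ?_ (by positivity) zero_le_one
            exact mul_le_mul_of_nonneg_left (Eop_norm_le hf) (norm_nonneg _)
        _ = ‖G‖ := by ring
    have hcn : ‖c‖ = 2 / δ := by
      rw [hc, Complex.norm_real, Real.norm_eq_abs, abs_of_pos (by positivity)]
    have hR := Rop_norm_le hδ hgap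
    calc ‖c • T + Rop hδ hgap‖ ≤ ‖c • T‖ + ‖Rop hδ hgap‖ := norm_add_le _ _
      _ = ‖c‖ * ‖T‖ + ‖Rop hδ hgap‖ := by rw [norm_smul c T]
      _ ≤ (2 / δ) * ‖G‖ + δ⁻¹ * (π ^ 2 / 3) := by
          rw [hcn]
          refine add_le_add (mul_le_mul_of_nonneg_left hTn (by positivity)) hR
      _ ≤ (1 / δ) * (2 * Real.pi ^ 2 / 3 + 2 * ‖G‖) := by
          rw [inv_eq_one_div]
          have hπ : (0:ℝ) ≤ π ^ 2 := sq_nonneg _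
          have h1δ : (0:ℝ) < 1 / δ := by positivity
          have key : (1 / δ) * (π ^ 2 / 3) ≤ (1 / δ) * (2 * π ^ 2 / 3) :=
            mul_le_mul_of_nonneg_left (by linarith) h1δ.le
          have hexp : (1 / δ) * (2 * Real.pi ^ 2 / 3 + 2 * ‖G‖)
              = (1 / δ) * (2 * π ^ 2 / 3) + 2 / δ * ‖G‖ := by ring
          rw [hexp]
          linarith
  · -- pointwise formula
    intro ξ n
    have hcoe : ((c • T + Rop hδ hgap) ξ : ∀ _ : ℕ, ℂ) n
        = c * (T ξ : ∀ _ : ℕ, ℂ) n + (Rop hδ hgap ξ : ∀ _ : ℕ, ℂ) n := by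
      rw [ContinuousLinearMap.add_apply, lp.coeFn_add, Pi.add_apply,
        ContinuousLinearMap.smul_apply, lp.coeFn_smul, Pi.smul_apply, smul_eq_mul]
    rw [hcoe, T_apply hf G hG, Rop_apply]
    -- restrict R sum to the subtype
    have hRsub : Rfun a δ ξ n
        = ∑' k : {k : ℕ // k ≠ n}, ((ρ a δ (k : ℕ) n : ℝ) : ℂ) * (ξ : ∀ _ : ℕ, ℂ) k := by
      have hsupp : (Function.support fun k => ((ρ a δ k n : ℝ) : ℂ) * (ξ : ∀ _ : ℕ, ℂ) k)
          ⊆ {k : ℕ | k ≠ n} := by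
        intro k hk
        simp only [Function.mem_support] at hk
        intro hc
        apply hk
        rw [hc]
        simp [ρ]
      rw [Rfun, ← tsum_subtype_eq_of_support_subset hsupp]
      rfl
    rw [hRsub]
    -- summability of both parts
    have hsub1 : Summable fun k : {k : ℕ // k ≠ n} =>
        c * ((ξ : ∀ _ : ℕ, ℂ) k / (((f k : ℕ) : ℂ) - ((f n : ℕ) : ℂ))) := by
      refine Summable.of_norm ?_
      have hmul : Summable fun k : {k : ℕ // k ≠ n} =>
          ‖(ξ : ∀ _ : ℕ, ℂ) k‖ * (1 / ‖(((f k : ℕ) : ℂ) - ((f n : ℕ) : ℂ))‖) := by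
        refine summable_mul_of_sq (fun k => norm_nonneg _) (fun k => by positivity)
          (((summable_sq ξ).subtype _).congr fun k => rfl) ?_
        refine Summable.of_nonneg_of_le (fun k => sq_nonneg _) (fun k => ?_)
          (((w_summable n).subtype {k : ℕ | k ≠ n}).congr fun k => rfl)
        have hnormf : ‖(((f k : ℕ) : ℂ) - ((f n : ℕ) : ℂ))‖ = |(f (k : ℕ) : ℝ) - f n| := by
          rw [← Complex.ofReal_natCast, ← Complex.ofReal_natCast, ← Complex.ofReal_sub,
            Complex.norm_real, Real.norm_eq_abs]
        have hge := abs_ff hδ hgap k.2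
        have habs := one_le_abs_cast k.2
        have hpos : (0:ℝ) < |(k : ℝ) - n| := by linarith
        have hfpos : (0:ℝ) < |(f (k : ℕ) : ℝ) - f n| := by linarith
        show (1 / ‖(((f k : ℕ) : ℂ) - ((f n : ℕ) : ℂ))‖) ^ 2 ≤ w (k : ℕ) n
        rw [hnormf, w, if_neg k.2]
        rw [div_pow, one_pow, ← sq_abs ((k:ℝ) - n)]
        refine div_le_div_of_nonneg_left zero_le_one (by positivity) ?_
        have h2 : |(k : ℝ) - n| ≤ |(f (k : ℕ) : ℝ) - f n| := by linarith
        nlinarith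
      refine (hmul.mul_left ‖c‖).congr fun k => ?_
      rw [norm_mul, norm_div]
      ring
    have hsub2 : Summable fun k : {k : ℕ // k ≠ n} =>
        ((ρ a δ (k : ℕ) n : ℝ) : ℂ) * (ξ : ∀ _ : ℕ, ℂ) k :=
      ((summable_rho hδ hgap ξ n).subtype {k : ℕ | k ≠ n}).congr fun k => rfl
    -- combine
    rw [← tsum_mul_left, ← Summable.tsum_add hsub1 hsub2]
    refine tsum_congr fun k => ?_
    -- pointwise algebraic identity
    have hkn : (k : ℕ) ≠ n := k.2
    have hfne : ((f (k : ℕ) : ℕ) : ℂ) - ((f n : ℕ) : ℂ) ≠ 0 := by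
      rw [sub_ne_zero]
      exact_mod_cast fun hc => hkn (hf (by exact_mod_cast hc))
    have hane : ((a (k : ℕ) : ℝ) : ℂ) - ((a n : ℝ) : ℂ) ≠ 0 := by
      rw [sub_ne_zero]
      have := abs_a hδ hgap hkn
      have habs := one_le_abs_cast hkn
      have : a (k : ℕ) ≠ a n := by
        intro hc
        rw [hc] at this
        simp at this
        nlinarith
      exact_mod_cast fun hc => this (by exact_mod_cast hc)
    have hδC : (δ : ℂ) ≠ 0 := by exact_mod_cast hδ.ne'
    rw [ρ, if_neg hkn, hc]
    push_cast
    simp only [← hfdef]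
    field_simp
    ring
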